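/- Let m ≥ 2 and n ≥ 3 be integers and let S_I(m,n) be the Type-I hyperedge-deleted Seidel matrix. For any two distinct indices i, j of the first block different from its first index, the vector e_i - e_j satisfies S_I(m,n)·(e_i - e_j) = (2n-1)·(e_i - e_j); and for any two distinct indices i, j of the second block different from its first two indices, S_I(m,n)·(e_i - e_j) = (2m-1)·(e_i - e_j). In particular 2n-1 is an eigenvalue of S_I(m,n) of multiplicity at least m-2 and 2m-1 is an eigenvalue of multiplicity at least n-3. -/

import Mathlib

open Polynomial Matrix

/-- The Seidel matrix of the complete 3-uniform bipartite hypergraph `C³_{m,n}`. -/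
noncomputable def seidelS (m n : ℕ) : Matrix (Fin m ⊕ Fin n) (Fin m ⊕ Fin n) ℝ :=
  fun i j =>
    if i = j then 0
    else
      match i, j with
      | Sum.inl _, Sum.inl _ => 1 - 2 * (n : ℝ)
      | Sum.inr _, Sum.inr _ => 1 - 2 * (m : ℝ)
      | _, _ => 1 - 2 * ((m : ℝ) + (n : ℝ) - 2)

/-- Type-I hyperedge-deleted Seidel matrix. -/
noncomputable def seidelI (m n : ℕ) : Matrix (Fin m ⊕ Fin n) (Fin m ⊕ Fin n) ℝ :=
  fun i j =>
    match i, j with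
    | Sum.inl a, Sum.inr b =>
        if a.val = 0 ∧ b.val ≤ 1 then 1 - 2 * ((m : ℝ) + (n : ℝ) - 3)
        else seidelS m n (Sum.inl a) (Sum.inr b)
    | Sum.inr b, Sum.inl a =>
        if a.val = 0 ∧ b.val ≤ 1 then 1 - 2 * ((m : ℝ) + (n : ℝ) - 3)
        else seidelS m n (Sum.inr b) (Sum.inl a)
    | Sum.inr a, Sum.inr b =>
        if (a.val = 0 ∧ b.val = 1) ∨ (a.val = 1 ∧ b.val = 0) then 1 - 2 * ((m : ℝ) - 1)
        else seidelS m n (Sum.inr a) (Sum.inr b)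
    | Sum.inl a, Sum.inl b => seidelS m n (Sum.inl a) (Sum.inl b)

/-- Type-II hyperedge-deleted Seidel matrix. -/
noncomputable def seidelII (m n : ℕ) : Matrix (Fin m ⊕ Fin n) (Fin m ⊕ Fin n) ℝ :=
  fun i j =>
    match i, j with
    | Sum.inl a, Sum.inl b =>
        if (a.val = 0 ∧ b.val = 1) ∨ (a.val = 1 ∧ b.val = 0) then 1 - 2 * ((n : ℝ) - 1)
        else seidelS m n (Sum.inl a) (Sum.inl b)
    | Sum.inl a, Sum.inr b =>
        if a.val ≤ 1 ∧ b.val = 0 then 1 - 2 * ((m : ℝ) + (n : ℝ) - 3)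
        else seidelS m n (Sum.inl a) (Sum.inr b)
    | Sum.inr b, Sum.inl a =>
        if a.val ≤ 1 ∧ b.val = 0 then 1 - 2 * ((m : ℝ) + (n : ℝ) - 3)
        else seidelS m n (Sum.inr b) (Sum.inl a)
    | Sum.inr a, Sum.inr b => seidelS m n (Sum.inr a) (Sum.inr b)

/-- Seidel energy: sum of absolute values of the eigenvalues (roots of the
characteristic polynomial, with multiplicity). -/
noncomputable def seidelEnergy {k : Type*} [Fintype k] [DecidableEq k]
    (M : Matrix k k ℝ) : ℝ :=
  (M.charpoly.roots.map (fun x => |x|)).sum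

lemma entryS1 (m n : ℕ) (i j : Fin m) (hij : i ≠ j) (hi : i.val ≠ 0) (hj : j.val ≠ 0)
    (x : Fin m ⊕ Fin n) :
    seidelI m n x (Sum.inl i) - seidelI m n x (Sum.inl j) =
      (2*(n:ℝ) - 1) * ((if x = Sum.inl i then (1:ℝ) else 0) -
        (if x = Sum.inl j then (1:ℝ) else 0)) := by
  rcases x with a | b
  · simp only [seidelI, seidelS, Sum.inl.injEq]
    by_cases hai : a = i <;> by_cases haj : a = j <;>
      simp_all <;> ring
  · simp only [seidelI, seidelS, hi, hj, false_and, if_false, reduceCtorEq]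
    ring

lemma entryS2 (m n : ℕ) (i j : Fin n) (hij : i ≠ j) (hi : 2 ≤ i.val) (hj : 2 ≤ j.val)
    (x : Fin m ⊕ Fin n) :
    seidelI m n x (Sum.inr i) - seidelI m n x (Sum.inr j) =
      (2*(m:ℝ) - 1) * ((if x = Sum.inr i then (1:ℝ) else 0) -
        (if x = Sum.inr j then (1:ℝ) else 0)) := by
  have hi0 : ¬ i.val ≤ 1 := by omega
  have hj0 : ¬ j.val ≤ 1 := by omega
  have hi1 : i.val ≠ 0 := by omega
  have hi2 : i.val ≠ 1 := by omega
  have hj1 : j.val ≠ 0 := by omega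
  have hj2 : j.val ≠ 1 := by omega
  rcases x with a | b
  · simp only [seidelI, seidelS, hi0, hj0, and_false, if_false, reduceCtorEq]
    ring
  · simp only [seidelI, seidelS, Sum.inr.injEq, hi1, hi2, hj1, hj2, and_false, false_and,
      false_or, or_self, if_false]
    by_cases hbi : b = i <;> by_cases hbj : b = j <;>
      simp_all <;> ring

lemma pow_dvd_det_of_cols {k : Type*} [Fintype k] [DecidableEq k] (μ : ℝ) (j₀ : k) :
    ∀ s : Finset k, j₀ ∉ s → ∀ N : Matrix k k (Polynomial ℝ),
      (∀ i ∈ s, ∀ x, N x i - N x j₀ =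
        (X - C μ) * ((if x = i then (1:Polynomial ℝ) else 0) -
          (if x = j₀ then (1:Polynomial ℝ) else 0))) →
      (X - C μ) ^ s.card ∣ N.det := by
  intro s
  induction s using Finset.induction_on with
  | empty => intro _ N _; simp
  | @insert a s ha ih =>
    intro hj N hN
    have haj : a ≠ j₀ := by rintro rfl; exact hj (Finset.mem_insert_self _ _)
    have hjs : j₀ ∉ s := fun h => hj (Finset.mem_insert_of_mem h)
    set v : k → Polynomial ℝ := fun x =>
      (if x = a then (1:Polynomial ℝ) else 0) - (if x = j₀ then (1:Polynomial ℝ) else 0) with hv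
    have hcol := hN a (Finset.mem_insert_self a s)
    have h1 : N.det = (N.updateCol a (fun x => N x a + (-1 : Polynomial ℝ) • N x j₀)).det :=
      (Matrix.det_updateCol_add_smul_self N haj (-1)).symm
    have h2 : (fun x => N x a + (-1 : Polynomial ℝ) • N x j₀) = (X - C μ) • v := by
      funext x
      have := hcol x
      simp only [hv, Pi.smul_apply, smul_eq_mul]
      rw [← this]; ring
    rw [h1, h2, Matrix.det_updateCol_smul, Finset.card_insert_of_notMem ha, pow_succ,
      mul_comm ((X - C μ) ^ s.card) (X - C μ)]
    refine mul_dvd_mul dvd_rfl (ih hjs _ ?_)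
    intro i hi x
    have hia : i ≠ a := fun h => ha (h ▸ hi)
    rw [Matrix.updateCol_apply, Matrix.updateCol_apply, if_neg hia, if_neg haj.symm]
    exact hN i (Finset.mem_insert_of_mem hi) x

lemma card_le_rootMultiplicity {k : Type*} [Fintype k] [DecidableEq k]
    (M : Matrix k k ℝ) (μ : ℝ) (j₀ : k) (s : Finset k) (hj : j₀ ∉ s)
    (h : ∀ i ∈ s, ∀ x, M x i - M x j₀ =
      μ * ((if x = i then (1:ℝ) else 0) - (if x = j₀ then (1:ℝ) else 0))) :
    s.card ≤ M.charpoly.rootMultiplicity μ := by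
  have hne : M.charpoly ≠ 0 := M.charpoly_monic.ne_zero
  rw [Polynomial.le_rootMultiplicity_iff hne]
  rw [Matrix.charpoly]
  apply pow_dvd_det_of_cols μ j₀ s hj
  intro i hi x
  have hx := h i hi x
  have hC : C (M x i) - C (M x j₀) =
      C μ * ((if x = i then (1:Polynomial ℝ) else 0) -
        (if x = j₀ then (1:Polynomial ℝ) else 0)) := by
    rw [← map_sub, hx, _root_.map_mul, _root_.map_sub, apply_ite C, apply_ite C, _root_.map_one, _root_.map_zero]
  have e1 : (if x = i then (X:Polynomial ℝ) else 0)
      = X * (if x = i then (1:Polynomial ℝ) else 0) := by split <;> ring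
  have e2 : (if x = j₀ then (X:Polynomial ℝ) else 0)
      = X * (if x = j₀ then (1:Polynomial ℝ) else 0) := by split <;> ring
  rw [Matrix.charmatrix_apply, Matrix.charmatrix_apply, Matrix.diagonal_apply,
    Matrix.diagonal_apply, e1, e2]
  linear_combination -hC

theorem stmt5 (m n : ℕ) (hm : 2 ≤ m) (hn : 3 ≤ n) :
    (∀ i j : Fin m, i ≠ j → i.val ≠ 0 → j.val ≠ 0 →
      (seidelI m n).mulVec
          (Pi.single (Sum.inl i) (1:ℝ) - Pi.single (Sum.inl j) (1:ℝ)) =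
        (2*(n:ℝ) - 1) • (Pi.single (Sum.inl i) (1:ℝ) - Pi.single (Sum.inl j) (1:ℝ))) ∧
    (∀ i j : Fin n, i ≠ j → 2 ≤ i.val → 2 ≤ j.val →
      (seidelI m n).mulVec
          (Pi.single (Sum.inr i) (1:ℝ) - Pi.single (Sum.inr j) (1:ℝ)) =
        (2*(m:ℝ) - 1) • (Pi.single (Sum.inr i) (1:ℝ) - Pi.single (Sum.inr j) (1:ℝ))) ∧
    m - 2 ≤ (seidelI m n).charpoly.rootMultiplicity (2*(n:ℝ) - 1) ∧
    n - 3 ≤ (seidelI m n).charpoly.rootMultiplicity (2*(m:ℝ) - 1) := by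
  refine ⟨?_, ?_, ?_, ?_⟩
  · intro i j hij hi hj
    funext x
    simp only [Matrix.mulVec_sub, Matrix.mulVec_single, Pi.sub_apply, Pi.smul_apply,
      smul_eq_mul, mul_one, Pi.single_apply, MulOpposite.op_one, one_smul, Matrix.col_apply]
    exact entryS1 m n i j hij hi hj x
  · intro i j hij hi hj
    funext x
    simp only [Matrix.mulVec_sub, Matrix.mulVec_single, Pi.sub_apply, Pi.smul_apply,
      smul_eq_mul, mul_one, Pi.single_apply, MulOpposite.op_one, one_smul, Matrix.col_apply]
    exact entryS2 m n i j hij hi hj x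
  · set s : Finset (Fin m ⊕ Fin n) :=
      Finset.univ.image (fun t : Fin (m-2) => Sum.inl (⟨t.val + 1, by omega⟩ : Fin m)) with hs
    have hinj : Function.Injective
        (fun t : Fin (m-2) => (Sum.inl (⟨t.val + 1, by omega⟩ : Fin m) : Fin m ⊕ Fin n)) := by
      intro a b hab
      simp only [Sum.inl.injEq, Fin.mk.injEq] at hab
      exact Fin.ext (by omega)
    have hcard : s.card = m - 2 := by
      rw [hs, Finset.card_image_of_injective _ hinj, Finset.card_univ, Fintype.card_fin]
    have hj0 : (Sum.inl (⟨m - 1, by omega⟩ : Fin m) : Fin m ⊕ Fin n) ∉ s := by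
      rw [hs]
      simp only [Finset.mem_image, Finset.mem_univ, true_and, Sum.inl.injEq, Fin.mk.injEq,
        not_exists]
      intro t
      omega
    rw [← hcard]
    apply card_le_rootMultiplicity _ _ _ s hj0
    intro idx hidx x
    rw [hs] at hidx
    obtain ⟨t, -, rfl⟩ := Finset.mem_image.mp hidx
    exact entryS1 m n _ _ (by simp only [ne_eq, Fin.mk.injEq]; omega)
      (by simp) (by simp; omega) x
  · set s : Finset (Fin m ⊕ Fin n) :=
      Finset.univ.image (fun t : Fin (n-3) => Sum.inr (⟨t.val + 2, by omega⟩ : Fin n)) with hs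
    have hinj : Function.Injective
        (fun t : Fin (n-3) => (Sum.inr (⟨t.val + 2, by omega⟩ : Fin n) : Fin m ⊕ Fin n)) := by
      intro a b hab
      simp only [Sum.inr.injEq, Fin.mk.injEq] at hab
      exact Fin.ext (by omega)
    have hcard : s.card = n - 3 := by
      rw [hs, Finset.card_image_of_injective _ hinj, Finset.card_univ, Fintype.card_fin]
    have hj0 : (Sum.inr (⟨n - 1, by omega⟩ : Fin n) : Fin m ⊕ Fin n) ∉ s := by
      rw [hs]
      simp only [Finset.mem_image, Finset.mem_univ, true_and, Sum.inr.injEq, Fin.mk.injEq,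
        not_exists]
      intro t
      omega
    rw [← hcard]
    apply card_le_rootMultiplicity _ _ _ s hj0
    intro idx hidx x
    rw [hs] at hidx
    obtain ⟨t, -, rfl⟩ := Finset.mem_image.mp hidx
    exact entryS2 m n _ _ (by simp only [ne_eq, Fin.mk.injEq]; omega)
      (by simp) (by simp; omega) x
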